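/- Let L* be a countable, locally finite lattice that is universal for finite lattices and ultrahomogeneous for finite lattices. Then for every n, every monotone function f : (L*)ⁿ → L* (with respect to the componentwise order on (L*)ⁿ), and every finite sublattice A of L*, there is an n-ary lattice polynomial function p on L* such that p x = f x for every n-tuple x with all coordinates in A. -/

import Mathlib

/-- A lattice is locally finite if every finite subset is contained in a finite
sublattice (a finite subset closed under `⊔` and `⊓`). -/
def LatLocallyFinite (L : Type) [Lattice L] : Prop :=
  ∀ S : Finset L, ∃ T : Finset L, S ⊆ T ∧ ∀ a ∈ T, ∀ b ∈ T, a ⊔ b ∈ T ∧ a ⊓ b ∈ T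

/-- A lattice embedding: an injective map preserving `⊔` and `⊓`. -/
def IsLatEmb {A L : Type} [Lattice A] [Lattice L] (e : A → L) : Prop :=
  Function.Injective e ∧ ∀ a b : A, e (a ⊔ b) = e a ⊔ e b ∧ e (a ⊓ b) = e a ⊓ e b

/-- A lattice `L` is universal for finite lattices if every finite lattice admits
a lattice embedding into `L`. -/
def UnivFin (L : Type) [Lattice L] : Prop :=
  ∀ (A : Type) [Fintype A] [Lattice A], ∃ e : A → L, IsLatEmb e

/-- A lattice `L` is ultrahomogeneous for finite lattices if for all finite lattices
`A`, `B`, every lattice embedding `j : A → B` and every lattice embedding `e : A → L`,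
there is a lattice embedding `e' : B → L` with `e' ∘ j = e`. -/
def UltraFin (L : Type) [Lattice L] : Prop :=
  ∀ (A B : Type) [Fintype A] [Lattice A] [Fintype B] [Lattice B]
    (j : A → B) (e : A → L), IsLatEmb j → IsLatEmb e →
    ∃ e' : B → L, IsLatEmb e' ∧ e' ∘ j = e

/-- The `n`-ary lattice polynomial functions on a lattice `L`: the smallest set of
functions `(Fin n → L) → L` containing the coordinate projections and all constants
and closed under pointwise join and meet. -/
inductive IsLatPolyN {L : Type} [Lattice L] (n : ℕ) : ((Fin n → L) → L) → Prop
  | proj (k : Fin n) : IsLatPolyN n (fun x => x k)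
  | const (c : L) : IsLatPolyN n (fun _ => c)
  | sup {p q : (Fin n → L) → L} :
      IsLatPolyN n p → IsLatPolyN n q → IsLatPolyN n (fun x => p x ⊔ q x)
  | inf {p q : (Fin n → L) → L} :
      IsLatPolyN n p → IsLatPolyN n q → IsLatPolyN n (fun x => p x ⊓ q x)

inductive MyExt (K : Type) : Type
  | bot : MyExt K
  | alpha : MyExt K
  | gg : MyExt K
  | dd : MyExt K
  | top : MyExt K
  | elem : K → MyExt K

namespace MyExt

variable {K : Type} [Lattice K] (a : K)

def le : MyExt K → MyExt K → Prop
  | bot, _ => True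
  | _, top => True
  | elem x, elem y => x ≤ y
  | alpha, elem x => a ≤ x
  | alpha, alpha => True
  | alpha, gg => True
  | gg, gg => True
  | dd, dd => True
  | _, _ => False

def sup : MyExt K → MyExt K → MyExt K
  | bot, y => y
  | x, bot => x
  | top, _ => top
  | _, top => top
  | elem x, elem y => elem (x ⊔ y)
  | elem x, alpha => elem (x ⊔ a)
  | alpha, elem y => elem (y ⊔ a)
  | alpha, alpha => alpha
  | alpha, gg => gg
  | gg, alpha => gg
  | gg, gg => gg
  | dd, dd => dd
  | _, _ => top

open Classical in
noncomputable def inf : MyExt K → MyExt K → MyExt K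
  | bot, _ => bot
  | _, bot => bot
  | top, y => y
  | x, top => x
  | elem x, elem y => elem (x ⊓ y)
  | elem x, alpha => if a ≤ x then alpha else bot
  | alpha, elem x => if a ≤ x then alpha else bot
  | elem x, gg => if a ≤ x then alpha else bot
  | gg, elem x => if a ≤ x then alpha else bot
  | alpha, alpha => alpha
  | alpha, gg => alpha
  | gg, alpha => alpha
  | gg, gg => gg
  | dd, dd => dd
  | _, _ => bot


variable {K : Type} [Lattice K] (a : K)

lemma my_le_refl (x : MyExt K) : le a x x := by
  cases x <;> first | trivial | exact le_rfl (α := K)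

lemma my_le_trans (x y z : MyExt K) (hxy : le a x y) (hyz : le a y z) : le a x z := by
  cases x <;> cases y <;> cases z <;>
    first
      | trivial
      | exact False.elim hxy
      | exact False.elim hyz
      | exact le_trans (α := K) hxy hyz
      | exact hxy
      | exact hyz

lemma my_le_antisymm (x y : MyExt K) (hxy : le a x y) (hyx : le a y x) : x = y := by
  cases x <;> cases y <;>
    first
      | rfl
      | exact False.elim hxy
      | exact False.elim hyx
      | exact congrArg elem (le_antisymm (α := K) hxy hyx)

lemma my_le_sup_left (x y : MyExt K) : le a x (sup a x y) := by
  cases x <;> cases y <;>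
    first
      | trivial
      | exact le_rfl (α := K)
      | exact le_sup_left (α := K)
      | exact le_sup_right (α := K)

lemma my_le_sup_right (x y : MyExt K) : le a y (sup a x y) := by
  cases x <;> cases y <;>
    first
      | trivial
      | exact le_rfl (α := K)
      | exact le_sup_left (α := K)
      | exact le_sup_right (α := K)

lemma my_sup_le (x y z : MyExt K) (hxz : le a x z) (hyz : le a y z) : le a (sup a x y) z := by
  cases x <;> cases y <;> cases z <;>
    first
      | trivial
      | exact hxz
      | exact hyz
      | exact False.elim hxz
      | exact False.elim hyz
      | exact sup_le (α := K) hxz hyz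
      | exact sup_le (α := K) hyz hxz

lemma my_inf_le_left (x y : MyExt K) : le a (inf a x y) x := by
  cases x <;> cases y <;>
    first
      | trivial
      | exact le_rfl (α := K)
      | exact inf_le_left (α := K)
      | exact inf_le_right (α := K)
      | (dsimp only [inf]; split <;> first | trivial | assumption)

lemma my_inf_le_right (x y : MyExt K) : le a (inf a x y) y := by
  cases x <;> cases y <;>
    first
      | trivial
      | exact le_rfl (α := K)
      | exact inf_le_left (α := K)
      | exact inf_le_right (α := K)
      | (dsimp only [inf]; split <;> first | trivial | assumption)

lemma my_le_inf (x y z : MyExt K) (hxy : le a x y) (hxz : le a x z) : le a x (inf a y z) := by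
  cases x <;> cases y <;> cases z <;>
    first
      | trivial
      | exact False.elim hxy
      | exact False.elim hxz
      | exact hxy
      | exact hxz
      | exact le_inf (α := K) hxy hxz
      | (dsimp only [inf]; split <;> first | trivial | assumption | contradiction)

noncomputable def lat : Lattice (MyExt K) where
  le := le a
  lt x y := le a x y ∧ ¬ le a y x
  lt_iff_le_not_ge _ _ := Iff.rfl
  le_refl := my_le_refl a
  le_trans := my_le_trans a
  le_antisymm := my_le_antisymm a
  sup := sup a
  le_sup_left := my_le_sup_left a
  le_sup_right := my_le_sup_right a
  sup_le := my_sup_le a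
  inf := inf a
  inf_le_left := my_inf_le_left a
  inf_le_right := my_inf_le_right a
  le_inf := my_le_inf a

noncomputable instance [Fintype K] : Fintype (MyExt K) := by
  classical
  exact Fintype.ofInjective
    (fun x : MyExt K =>
      match x with
      | bot => Sum.inr (0 : Fin 5)
      | alpha => Sum.inr 1
      | gg => Sum.inr 2
      | dd => Sum.inr 3
      | top => Sum.inr 4
      | elem k => Sum.inl (k : K))
    (by intro x y h; cases x <;> cases y <;> simp_all)

end MyExt

section Helpers

variable {L : Type} [Lattice L] {n : ℕ}

lemma isLatPolyN_sup' {ι : Type} (s : Finset ι) (hs : s.Nonempty)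
    (F : ι → (Fin n → L) → L) (hF : ∀ i ∈ s, IsLatPolyN n (F i)) :
    IsLatPolyN n (fun x => s.sup' hs fun i => F i x) := by
  classical
  induction s using Finset.induction_on with
  | empty => simp at hs
  | @insert a s ha ih =>
    rcases s.eq_empty_or_nonempty with rfl | hs'
    · have : (fun x => (insert a ∅ : Finset ι).sup' hs fun i => F i x) = F a := by
        funext x; simp
      rw [this]; exact hF a (by simp)
    · have : (fun x => (insert a s : Finset ι).sup' hs fun i => F i x)
          = fun x => F a x ⊔ s.sup' hs' (fun i => F i x) := by
        funext x; rw [Finset.sup'_insert]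
      rw [this]
      exact (hF a (by simp)).sup (ih hs' fun i hi => hF i (by simp [hi]))

lemma isLatPolyN_inf' {ι : Type} (s : Finset ι) (hs : s.Nonempty)
    (F : ι → (Fin n → L) → L) (hF : ∀ i ∈ s, IsLatPolyN n (F i)) :
    IsLatPolyN n (fun x => s.inf' hs fun i => F i x) := by
  classical
  induction s using Finset.induction_on with
  | empty => simp at hs
  | @insert a s ha ih =>
    rcases s.eq_empty_or_nonempty with rfl | hs'
    · have : (fun x => (insert a ∅ : Finset ι).inf' hs fun i => F i x) = F a := by
        funext x; simp
      rw [this]; exact hF a (by simp)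
    · have : (fun x => (insert a s : Finset ι).inf' hs fun i => F i x)
          = fun x => F a x ⊓ s.inf' hs' (fun i => F i x) := by
        funext x; rw [Finset.inf'_insert]
      rw [this]
      exact (hF a (by simp)).inf (ih hs' fun i hi => hF i (by simp [hi]))

end Helpers

/-- The typical countable lattice has the monotone interpolation property:
every monotone function of finitely many variables agrees with a lattice
polynomial function on every finite sublattice. -/
theorem fraisse_lattice_monotone_interpolation (L : Type) [Lattice L]
    (hc : Countable L) (hlf : LatLocallyFinite L) (hu : UnivFin L) (hh : UltraFin L)
    (n : ℕ) (f : (Fin n → L) → L) (hf : Monotone f)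
    (A : Set L) (hA : A.Finite)
    (hcl : ∀ a ∈ A, ∀ b ∈ A, a ⊔ b ∈ A ∧ a ⊓ b ∈ A) :
    ∃ p : (Fin n → L) → L, IsLatPolyN n p ∧
      ∀ x : Fin n → L, (∀ k, x k ∈ A) → p x = f x := by
  classical
  rcases Nat.eq_zero_or_pos n with hn | hn
  · subst hn
    refine ⟨fun _ => f (fun i => i.elim0), .const _, fun x _ => ?_⟩
    have : x = fun i => i.elim0 := funext fun i => i.elim0
    rw [this]
  rcases A.eq_empty_or_nonempty with hA0 | ⟨a0, ha0⟩
  · exact ⟨fun x => x ⟨0, hn⟩, .proj _, fun x hx => absurd (hx ⟨0, hn⟩) (by simp [hA0])⟩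
  -- setup
  set As := hA.toFinset with hAs
  have hmemAs : ∀ {x : L}, x ∈ As ↔ x ∈ A := fun {x} => hA.mem_toFinset
  let tuples : Finset (Fin n → L) := Fintype.piFinset fun _ => As
  have htne : tuples.Nonempty :=
    ⟨fun _ => a0, by simp only [tuples, Fintype.mem_piFinset]; exact fun _ => hmemAs.mpr ha0⟩
  obtain ⟨T, hST, hTcl⟩ := hlf (As ∪ tuples.image f)
  have hAT : ∀ {x : L}, x ∈ A → x ∈ T := fun {x} hx =>
    hST (Finset.mem_union_left _ (hmemAs.mpr hx))
  have hfT : ∀ {c}, c ∈ tuples → f c ∈ T := fun {c} hc =>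
    hST (Finset.mem_union_right _ (Finset.mem_image_of_mem f hc))
  letI instK : Lattice {x // x ∈ T} :=
    { le := fun u v => u.1 ≤ v.1
      lt := fun u v => u.1 ≤ v.1 ∧ ¬ v.1 ≤ u.1
      lt_iff_le_not_ge := fun _ _ => Iff.rfl
      le_refl := fun u => le_refl _
      le_trans := fun u v w huv hvw => le_trans huv hvw
      le_antisymm := fun u v h1 h2 => Subtype.ext (le_antisymm h1 h2)
      sup := fun u v => ⟨u.1 ⊔ v.1, (hTcl _ u.2 _ v.2).1⟩
      le_sup_left := fun u v => le_sup_left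
      le_sup_right := fun u v => le_sup_right
      sup_le := fun u v w h1 h2 => sup_le h1 h2
      inf := fun u v => ⟨u.1 ⊓ v.1, (hTcl _ u.2 _ v.2).2⟩
      inf_le_left := fun u v => inf_le_left
      inf_le_right := fun u v => inf_le_right
      le_inf := fun u v w h1 h2 => le_inf h1 h2 }
  haveI instKF : Fintype {x // x ∈ T} := FinsetCoe.fintype T
  have key : ∀ ah : {x // x ∈ T}, ∃ g d : L,
      (∀ x, ∀ hx : x ∈ T, ah.1 ≤ x → ∀ y ∈ T, y ≤ (x ⊓ g) ⊔ d) ∧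
      (∀ x, ∀ hx : x ∈ T, ¬ ah.1 ≤ x → ∀ y ∈ T, ∀ z ∈ T, ((x ⊓ g) ⊔ d) ⊓ y ≤ z) := by
    intro ah
    letI instB : Lattice (MyExt {x // x ∈ T}) := MyExt.lat ah
    obtain ⟨e', ⟨hinj, hpres⟩, hcomp⟩ :=
      hh {x // x ∈ T} (MyExt {x // x ∈ T}) MyExt.elem Subtype.val
        ⟨fun u v h => by injection h, fun u v => ⟨rfl, rfl⟩⟩
        ⟨Subtype.val_injective, fun u v => ⟨rfl, rfl⟩⟩
    have hmono : ∀ {u v : MyExt {x // x ∈ T}}, u ≤ v → e' u ≤ e' v := by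
      intro u v huv
      have h1 : u ⊔ v = v := sup_eq_right.mpr huv
      calc e' u ≤ e' u ⊔ e' v := le_sup_left
        _ = e' (u ⊔ v) := ((hpres u v).1).symm
        _ = e' v := by rw [h1]
    refine ⟨e' MyExt.gg, e' MyExt.dd, ?_, ?_⟩
    · intro x hx hax y hy
      have hex : e' (MyExt.elem ⟨x, hx⟩) = x := congrFun hcomp ⟨x, hx⟩
      have hstep : (x ⊓ e' MyExt.gg) ⊔ e' MyExt.dd
          = e' ((MyExt.elem ⟨x, hx⟩ ⊓ MyExt.gg) ⊔ MyExt.dd) := by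
        rw [(hpres _ _).1, (hpres _ _).2, hex]
      have h1 : MyExt.elem (⟨x, hx⟩ : {x // x ∈ T}) ⊓ MyExt.gg = MyExt.alpha := by
        show MyExt.inf ah _ _ = _
        dsimp only [MyExt.inf]
        rw [if_pos (show ah ≤ (⟨x, hx⟩ : {x // x ∈ T}) from hax)]
      have hcompute : (MyExt.elem (⟨x, hx⟩ : {x // x ∈ T}) ⊓ MyExt.gg) ⊔ MyExt.dd
          = (MyExt.top : MyExt {x // x ∈ T}) := by
        rw [h1]; rfl
      rw [hstep, hcompute]
      have hle : (MyExt.elem (⟨y, hy⟩ : {x // x ∈ T}) : MyExt {x // x ∈ T}) ≤ MyExt.top := by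
        show MyExt.le ah _ _; trivial
      calc y = e' (MyExt.elem ⟨y, hy⟩) := (congrFun hcomp (⟨y, hy⟩ : {x // x ∈ T})).symm
        _ ≤ e' MyExt.top := hmono hle
    · intro x hx hax y hy z hz
      have hex : e' (MyExt.elem ⟨x, hx⟩) = x := congrFun hcomp ⟨x, hx⟩
      have hey : e' (MyExt.elem ⟨y, hy⟩) = y := congrFun hcomp ⟨y, hy⟩
      have hstep : ((x ⊓ e' MyExt.gg) ⊔ e' MyExt.dd) ⊓ y
          = e' (((MyExt.elem ⟨x, hx⟩ ⊓ MyExt.gg) ⊔ MyExt.dd) ⊓ MyExt.elem ⟨y, hy⟩) := by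
        rw [(hpres _ _).2, (hpres _ _).1, (hpres _ _).2, hex, hey]
      have h1 : MyExt.elem (⟨x, hx⟩ : {x // x ∈ T}) ⊓ MyExt.gg = MyExt.bot := by
        show MyExt.inf ah _ _ = _
        dsimp only [MyExt.inf]
        rw [if_neg (show ¬ ah ≤ (⟨x, hx⟩ : {x // x ∈ T}) from hax)]
      have hcompute : ((MyExt.elem (⟨x, hx⟩ : {x // x ∈ T}) ⊓ MyExt.gg) ⊔ MyExt.dd)
          ⊓ MyExt.elem ⟨y, hy⟩ = (MyExt.bot : MyExt {x // x ∈ T}) := by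
        rw [h1]; rfl
      rw [hstep, hcompute]
      have hle : (MyExt.bot : MyExt {x // x ∈ T}) ≤ MyExt.elem ⟨z, hz⟩ := by
        show MyExt.le ah _ _; trivial
      calc e' MyExt.bot ≤ e' (MyExt.elem ⟨z, hz⟩) := hmono hle
        _ = z := congrFun hcomp _
  choose gf df hkey using key
  let GG : L → L := fun v => if h : v ∈ T then gf ⟨v, h⟩ else v
  let DD : L → L := fun v => if h : v ∈ T then df ⟨v, h⟩ else v
  have hGG : ∀ {v : L} (h : v ∈ T), GG v = gf ⟨v, h⟩ := fun {v} h => dif_pos h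
  have hDD : ∀ {v : L} (h : v ∈ T), DD v = df ⟨v, h⟩ := fun {v} h => dif_pos h
  have hune : (Finset.univ : Finset (Fin n)).Nonempty := ⟨⟨0, hn⟩, Finset.mem_univ _⟩
  refine ⟨fun x => tuples.sup' htne fun c =>
      f c ⊓ Finset.univ.inf' hune fun k => (x k ⊓ GG (c k)) ⊔ DD (c k), ?_, ?_⟩
  · apply isLatPolyN_sup'
    intro c hc
    exact (IsLatPolyN.const (f c)).inf (isLatPolyN_inf' _ hune _ fun k _ =>
      ((IsLatPolyN.proj k).inf (.const _)).sup (.const _))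
  · intro x hx
    have hxT : ∀ k, x k ∈ T := fun k => hAT (hx k)
    have hxt : x ∈ tuples := by
      simp only [tuples, Fintype.mem_piFinset]; exact fun k => hmemAs.mpr (hx k)
    have hcT : ∀ {c}, c ∈ tuples → ∀ k, c k ∈ T := by
      intro c hc k
      exact hST (Finset.mem_union_left _ ((Fintype.mem_piFinset.mp hc) k))
    apply le_antisymm
    · apply Finset.sup'_le
      intro c hc
      by_cases hcx : ∀ k, c k ≤ x k
      · exact le_trans inf_le_left (hf fun k => hcx k)
      · push_neg at hcx; obtain ⟨k0, hk0⟩ := hcx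
        have h1 : (f c ⊓ Finset.univ.inf' hune fun k => (x k ⊓ GG (c k)) ⊔ DD (c k))
            ≤ ((x k0 ⊓ GG (c k0)) ⊔ DD (c k0)) ⊓ f c := by
          rw [inf_comm]
          exact inf_le_inf_right _ (Finset.inf'_le _ (Finset.mem_univ k0))
        rw [hGG (hcT hc k0), hDD (hcT hc k0)] at h1
        refine h1.trans ?_
        exact (hkey ⟨c k0, hcT hc k0⟩).2 (x k0) (hxT k0) hk0 (f c) (hfT hc) (f x) (hfT hxt)
    · refine le_trans ?_ (Finset.le_sup' _ hxt)
      refine le_inf le_rfl ?_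
      refine Finset.le_inf' _ _ fun k _ => ?_
      rw [hGG (hxT k), hDD (hxT k)]
      exact (hkey ⟨x k, hxT k⟩).1 (x k) (hxT k) le_rfl (f x) (hfT hxt)
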